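/- For every a ∈ V_{n,d}^α with a ≠ η (the lex-smallest element), there exists b ∈ V_{n,d}^α with a >_lex b ≥_lex η such that (a,b) is sorted and length(Δ(a,b)) = 1. Consequently rank(a) ∈ ℕ and there is a chain a = b^0 >_lex b^1 >_lex ⋯ >_lex b^m = η with each consecutive pair sorted of signature-length 1. -/
import Mathlib


/-- The set `V_{n,d}^α` of nonnegative integer tuples with coordinate sum `d`
and coordinatewise bound `α`. -/
def VT (n d : ℕ) (α : Fin n → ℕ) : Set (Fin n → ℕ) :=
  {c | (∑ i, c i) = d ∧ ∀ i, c i ≤ α i}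

/-- `a >_lex b`: the leftmost nonzero entry of `a - b` is positive. -/
def lexGT {n : ℕ} (a b : Fin n → ℕ) : Prop :=
  ∃ i : Fin n, (∀ j, j < i → a j = b j) ∧ b i < a i

/-- `sort(a,b) = (a,b)` for Sturmfels' sorting operator: for every `t`, the prefix
sum of `a` up to `t` equals the ceiling of half the prefix sum of `a + b`. -/
def sortedPair {n : ℕ} (a b : Fin n → ℕ) : Prop :=
  ∀ t : Fin n, 2 * (∑ i ∈ Finset.Iic t, a i)
    = (∑ i ∈ Finset.Iic t, (a i + b i)) + (∑ i ∈ Finset.Iic t, (a i + b i)) % 2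

/-- The sorting signature set `Δ(a,b)` of a sorted pair, recorded (0-indexed) as the
set of positions `t` where the prefix sum of `b` is one less than that of `a`. -/
def sigSet {n : ℕ} (a b : Fin n → ℕ) : Finset (Fin n) :=
  Finset.univ.filter (fun t => (∑ i ∈ Finset.Iic t, b i) + 1 = ∑ i ∈ Finset.Iic t, a i)

/-- Adjacency in the sorting graph `𝒢(d,α)`. -/
def adjG {n : ℕ} (a b : Fin n → ℕ) : Prop :=
  (lexGT a b ∧ sortedPair a b) ∨ (lexGT b a ∧ sortedPair b a)

/-- A clique of the sorting graph `𝒢(d,α)`. -/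
def isClique (n d : ℕ) (α : Fin n → ℕ) (S : Finset (Fin n → ℕ)) : Prop :=
  (↑S ⊆ VT n d α) ∧ ∀ a ∈ S, ∀ b ∈ S, a ≠ b → adjG a b

/-- A maximal clique of the sorting graph `𝒢(d,α)`. -/
def isMaxClique (n d : ℕ) (α : Fin n → ℕ) (S : Finset (Fin n → ℕ)) : Prop :=
  isClique n d α S ∧ ∀ T, isClique n d α T → S ⊆ T → S = T

namespace Aux14

variable {n d : ℕ}

lemma sum_Iic_Ioi (x : Fin n → ℕ) (t : Fin n) :
    (∑ i ∈ Finset.Iic t, x i) + ∑ i ∈ Finset.Ioi t, x i = ∑ i, x i := by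
  rw [← Finset.sum_union]
  · congr 1
    ext j
    simp only [Finset.mem_union, Finset.mem_Iic, Finset.mem_Ioi, Finset.mem_univ,
      Fin.le_def, Fin.lt_def, iff_true]
    omega
  · rw [Finset.disjoint_left]
    intro j h1 h2
    exact absurd (Finset.mem_Iic.1 h1) (not_le.2 (Finset.mem_Ioi.1 h2))

lemma Ioi_eq_Ici (t t' : Fin n) (h : t'.1 = t.1 + 1) :
    Finset.Ioi t = Finset.Ici t' := by
  ext j
  simp only [Finset.mem_Ioi, Finset.mem_Ici, Fin.le_def, Fin.lt_def, h]
  omega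

lemma Ici_last (t : Fin n) (h : t.1 = n - 1) :
    Finset.Ici t = {t} := by
  have := t.2
  ext j
  simp only [Finset.mem_Ici, Finset.mem_singleton, Fin.le_def, Fin.ext_iff]
  have := j.2
  omega

lemma Ici_insert (t : Fin n) : Finset.Ici t = insert t (Finset.Ioi t) := by
  ext j
  simp only [Finset.mem_Ici, Finset.mem_insert, Finset.mem_Ioi, Fin.le_def, Fin.lt_def,
    Fin.ext_iff]
  omega

lemma Iic_insert' (t : Fin n) : Finset.Iic t = insert t (Finset.Iio t) := by
  ext j
  simp only [Finset.mem_Iic, Finset.mem_insert, Finset.mem_Iio, Fin.le_def, Fin.lt_def,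
    Fin.ext_iff]
  omega

lemma move {α : Fin n → ℕ} (a : Fin n → ℕ) (ha : a ∈ VT n d α) (i i' : Fin n)
    (hii : i'.1 = i.1 + 1) (hai : 1 ≤ a i) (hai' : a i' < α i') :
    ∃ b ∈ VT n d α, lexGT a b ∧ sortedPair a b ∧ (sigSet a b).card = 1 ∧
      (∀ t : Fin n, t ≠ i → ∑ j ∈ Finset.Iic t, b j = ∑ j ∈ Finset.Iic t, a j) ∧
      (∑ j ∈ Finset.Iic i, b j) + 1 = ∑ j ∈ Finset.Iic i, a j := by
  classical
  have hine : i ≠ i' := by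
    intro h; rw [h] at hii; omega
  set b : Fin n → ℕ := fun j => if j = i then a i - 1 else if j = i' then a i' + 1 else a j
    with hb
  have hkey : ∀ s : Finset (Fin n),
      (∑ j ∈ s, b j) + (if i ∈ s then 1 else 0)
        = (∑ j ∈ s, a j) + (if i' ∈ s then 1 else 0) := by
    intro s
    have hfun : ∀ j, b j + (if j = i then 1 else 0) = a j + (if j = i' then 1 else 0) := by
      intro j
      by_cases h1 : j = i
      · subst h1
        simp [hb, hine, hai]
      · by_cases h2 : j = i'
        · subst h2; simp [hb, h1]
        · simp [hb, h1, h2]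
    calc (∑ j ∈ s, b j) + (if i ∈ s then 1 else 0)
        = ∑ j ∈ s, (b j + if j = i then 1 else 0) := by
          rw [Finset.sum_add_distrib, Finset.sum_ite_eq' s i (fun _ => 1)]
      _ = ∑ j ∈ s, (a j + if j = i' then 1 else 0) := by
          exact Finset.sum_congr rfl fun j _ => hfun j
      _ = (∑ j ∈ s, a j) + (if i' ∈ s then 1 else 0) := by
          rw [Finset.sum_add_distrib, Finset.sum_ite_eq' s i' (fun _ => 1)]
  have hbV : b ∈ VT n d α := by
    constructor
    · have := hkey Finset.univ
      simp only [Finset.mem_univ, if_pos] at this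
      have hs := ha.1
      omega
    · intro j
      by_cases h1 : j = i
      · have hbj : b j = a i - 1 := by simp [hb, h1]
        rw [hbj, h1]
        exact le_trans (Nat.sub_le _ _) (ha.2 i)
      · by_cases h2 : j = i'
        · have hbj : b j = a i' + 1 := by simp [hb, h1, h2, hine.symm]
          rw [hbj, h2]
          omega
        · simp only [hb, if_neg h1, if_neg h2]
          exact ha.2 j
  have hbj : ∀ j, j ≠ i → j ≠ i' → b j = a j := by
    intro j h1 h2; simp [hb, h1, h2]
  have hpe : ∀ t : Fin n, t ≠ i → ∑ j ∈ Finset.Iic t, b j = ∑ j ∈ Finset.Iic t, a j := by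
    intro t ht
    have h := hkey (Finset.Iic t)
    have hti : i ∈ Finset.Iic t ↔ i.1 ≤ t.1 := by
      rw [Finset.mem_Iic, Fin.le_def]
    have hti' : i' ∈ Finset.Iic t ↔ i'.1 ≤ t.1 := by
      rw [Finset.mem_Iic, Fin.le_def]
    have htne : t.1 ≠ i.1 := fun hc => ht (Fin.ext hc)
    by_cases hc : i.1 ≤ t.1
    · have hc' : i'.1 ≤ t.1 := by omega
      rw [if_pos (hti.2 hc), if_pos (hti'.2 hc')] at h
      omega
    · have hc' : ¬ i'.1 ≤ t.1 := by omega
      rw [if_neg (fun hm => hc (hti.1 hm)), if_neg (fun hm => hc' (hti'.1 hm))] at h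
      omega
  have hpai : 1 ≤ ∑ j ∈ Finset.Iic i, a j := by
    calc 1 ≤ a i := hai
      _ ≤ ∑ j ∈ Finset.Iic i, a j :=
        Finset.single_le_sum (fun j _ => Nat.zero_le _) (Finset.mem_Iic.2 le_rfl)
  have hpi : (∑ j ∈ Finset.Iic i, b j) + 1 = ∑ j ∈ Finset.Iic i, a j := by
    have h := hkey (Finset.Iic i)
    rw [if_pos (Finset.mem_Iic.2 le_rfl),
      if_neg (fun hm => by have := Finset.mem_Iic.1 hm; rw [Fin.le_def] at this; omega)] at h
    omega
  refine ⟨b, hbV, ⟨i, ?_, ?_⟩, ?_, ?_, hpe, hpi⟩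
  · intro j hj
    rw [Fin.lt_def] at hj
    exact (hbj j (fun hc => by rw [hc] at hj; omega)
      (fun hc => by rw [hc] at hj; omega)).symm
  · simp only [hb, if_pos rfl]; omega
  · intro t
    rw [Finset.sum_add_distrib]
    by_cases ht : t = i
    · subst ht; omega
    · have := hpe t ht; omega
  · have : sigSet a b = {i} := by
      ext t
      simp only [sigSet, Finset.mem_filter, Finset.mem_univ, true_and, Finset.mem_singleton]
      constructor
      · intro h
        by_contra hc
        have := hpe t hc
        omega
      · intro h; subst h; exact hpi
    rw [this, Finset.card_singleton]

section Eta
variable {α η : Fin n → ℕ}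
  (hη : ∀ i : Fin n, η i = min (α i) (d - ∑ j ∈ Finset.Ioi i, η j))

include hη

lemma suffix_eta (i : Fin n) :
    ∑ j ∈ Finset.Ici i, η j = min (∑ j ∈ Finset.Ici i, α j) d := by
  have hn : 0 < n := i.pos
  obtain ⟨k, hk⟩ : ∃ k, n - i.1 ≤ k := ⟨n, by omega⟩
  induction k generalizing i with
  | zero => omega
  | succ k ih =>
    by_cases hlast : i.1 = n - 1
    · have hIoi : Finset.Ioi i = ∅ := by
        ext j
        simp only [Finset.mem_Ioi, Finset.notMem_empty, iff_false, not_lt, Fin.le_def]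
        have := j.2; omega
      rw [Ici_last i hlast, Finset.sum_singleton, Finset.sum_singleton, hη i, hIoi]
      simp
    · set i' : Fin n := ⟨i.1 + 1, by omega⟩ with hi'
      have hIoi : Finset.Ioi i = Finset.Ici i' := Ioi_eq_Ici i i' rfl
      have IH := ih i' (by simp only [hi']; omega)
      have h1 : ∑ j ∈ Finset.Ici i, η j = η i + ∑ j ∈ Finset.Ici i', η j := by
        rw [Ici_insert, Finset.sum_insert (by simp), hIoi]
      have h2 : ∑ j ∈ Finset.Ici i, α j = α i + ∑ j ∈ Finset.Ici i', α j := by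
        rw [Ici_insert, Finset.sum_insert (by simp), hIoi]
      have h3 := hη i
      rw [hIoi, IH] at h3
      omega

lemma sum_eta (hd : d ≤ ∑ i, α i) (hn : 0 < n) : ∑ i, η i = d := by
  have hu : Finset.Ici (⟨0, hn⟩ : Fin n) = Finset.univ := by
    ext j
    simp only [Finset.mem_Ici, Finset.mem_univ, iff_true, Fin.le_def]
    omega
  have := suffix_eta hη (⟨0, hn⟩ : Fin n)
  rw [hu] at this
  omega

lemma eta_le (i : Fin n) : η i ≤ α i := by rw [hη i]; exact min_le_left _ _

lemma eta_mem (hd : d ≤ ∑ i, α i) (hn : 0 < n) : η ∈ VT n d α :=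
  ⟨sum_eta hη hd hn, eta_le hη⟩

lemma suffix_eta_ge (a : Fin n → ℕ) (ha : a ∈ VT n d α) (t : Fin n) :
    ∑ j ∈ Finset.Ioi t, a j ≤ ∑ j ∈ Finset.Ioi t, η j := by
  by_cases hlast : t.1 = n - 1
  · have hIoi : Finset.Ioi t = ∅ := by
      ext j
      simp only [Finset.mem_Ioi, Finset.notMem_empty, iff_false, not_lt, Fin.le_def]
      have := j.2; omega
    simp [hIoi]
  · have hn : 0 < n := t.pos
    set t' : Fin n := ⟨t.1 + 1, by omega⟩ with ht'
    rw [Ioi_eq_Ici t t' rfl, suffix_eta hη t']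
    have h1 : ∑ j ∈ Finset.Ici t', a j ≤ ∑ j ∈ Finset.Ici t', α j :=
      Finset.sum_le_sum fun j _ => ha.2 j
    have h2 : ∑ j ∈ Finset.Ici t', a j ≤ d := by
      have h := sum_Iic_Ioi a t
      rw [Ioi_eq_Ici t t' rfl, ha.1] at h
      omega
    omega

lemma pref_eta_le (hd : d ≤ ∑ i, α i)
    (a : Fin n → ℕ) (ha : a ∈ VT n d α) (t : Fin n) :
    ∑ j ∈ Finset.Iic t, η j ≤ ∑ j ∈ Finset.Iic t, a j := by
  have h1 := sum_Iic_Ioi a t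
  have h2 := sum_Iic_Ioi η t
  have h3 := suffix_eta_ge hη a ha t
  have h4 := sum_eta hη hd t.pos
  rw [ha.1] at h1
  omega



/-- any member of VT other than η is lex-greater than η -/
lemma lex_min (hd : d ≤ ∑ i, α i)
    (a : Fin n → ℕ) (ha : a ∈ VT n d α) (hne : a ≠ η) : lexGT a η := by
  classical
  set S : Finset (Fin n) := Finset.univ.filter (fun j => a j ≠ η j) with hS
  have hSne : S.Nonempty := by
    by_contra h
    apply hne
    funext j
    by_contra hj
    exact h ⟨j, by simp [hS, hj]⟩
  set i := S.min' hSne with hi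
  have hiS : i ∈ S := S.min'_mem hSne
  have hlt : ∀ j, j < i → a j = η j := by
    intro j hj
    by_contra hcon
    exact absurd (S.min'_le j (by simp [hS, hcon])) (not_le.2 hj)
  refine ⟨i, hlt, ?_⟩
  have h1 := pref_eta_le hη hd a ha i
  rw [Iic_insert' i] at h1
  rw [Finset.sum_insert (by simp), Finset.sum_insert (by simp)] at h1
  have h2 : ∑ j ∈ Finset.Iio i, η j = ∑ j ∈ Finset.Iio i, a j :=
    Finset.sum_congr rfl fun j hj => (hlt j (Finset.mem_Iio.1 hj)).symm
  have h3 : a i ≠ η i := by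
    have := Finset.mem_filter.1 hiS
    exact this.2
  omega

lemma exists_step (hd : d ≤ ∑ i, α i) (hn : 3 ≤ n)
    (hα0 : 1 ≤ α ⟨0, by omega⟩) (hmono : Monotone α)
    (a : Fin n → ℕ) (ha : a ∈ VT n d α) (hne : a ≠ η) :
    ∃ i i' : Fin n, i'.1 = i.1 + 1 ∧ 1 ≤ a i ∧ a i' < α i' := by
  classical
  have hex : ∃ i0 : Fin n, a i0 < α i0 ∧ ∃ j : Fin n, j < i0 ∧ a j ≠ 0 := by
    by_contra hcon
    push_neg at hcon
    obtain ⟨i, heq, hlt⟩ := lex_min hη hd a ha hne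
    have hall : ∀ k : Fin n, i < k → a k = α k := by
      intro k hk
      by_contra hak
      have h1 : a k < α k := lt_of_le_of_ne (ha.2 k) hak
      have := hcon k h1 i hk
      omega
    have h1 := sum_Iic_Ioi a i
    have h2 := sum_Iic_Ioi η i
    have h3 : ∑ j ∈ Finset.Ioi i, a j = ∑ j ∈ Finset.Ioi i, α j :=
      Finset.sum_congr rfl fun j hj => hall j (Finset.mem_Ioi.1 hj)
    have h4 : ∑ j ∈ Finset.Ioi i, η j ≤ ∑ j ∈ Finset.Ioi i, α j :=
      Finset.sum_le_sum fun j _ => eta_le hη j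
    have h5 : ∑ j ∈ Finset.Iio i, η j = ∑ j ∈ Finset.Iio i, a j :=
      Finset.sum_congr rfl fun j hj => (heq j (Finset.mem_Iio.1 hj)).symm
    rw [Iic_insert' i, Finset.sum_insert (by simp)] at h1
    rw [Iic_insert' i, Finset.sum_insert (by simp)] at h2
    rw [ha.1] at h1
    rw [sum_eta hη hd i.pos] at h2
    omega
  obtain ⟨i0, hlt0, j0, hj0, haj0⟩ := hex
  set S : Finset (Fin n) := Finset.univ.filter (fun j => j < i0 ∧ a j ≠ 0) with hS
  have hSne : S.Nonempty := ⟨j0, by simp [hS, hj0, haj0]⟩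
  set j := S.max' hSne with hj
  have hjS : j ∈ S := S.max'_mem hSne
  rw [hS, Finset.mem_filter] at hjS
  have hji0 : j < i0 := hjS.2.1
  have hji0' : j.1 < i0.1 := hji0
  have hlt : j.1 + 1 < n := by have := i0.2; omega
  set j' : Fin n := ⟨j.1 + 1, hlt⟩ with hj'
  refine ⟨j, j', rfl, Nat.one_le_iff_ne_zero.2 hjS.2.2, ?_⟩
  by_cases hc : j' = i0
  · rwa [hc]
  · have hj'i0 : j' < i0 := by
      rw [Fin.lt_def]
      have : j'.1 ≤ i0.1 := hji0'
      have hne' : j'.1 ≠ i0.1 := fun h => hc (Fin.ext h)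
      omega
    have haj' : a j' = 0 := by
      by_contra hcon
      have hj'S : j' ∈ S := by simp [hS, hj'i0, hcon]
      have h6 := S.le_max' j' hj'S
      rw [← hj, Fin.le_def] at h6
      have h7 : j'.1 = j.1 + 1 := rfl
      omega
    have : 1 ≤ α j' := le_trans hα0 (hmono (by rw [Fin.le_def]; simp))
    omega

lemma rank_pos (hd : d ≤ ∑ i, α i)
    (a : Fin n → ℕ) (ha : a ∈ VT n d α) (hne : a ≠ η) :
    1 ≤ ∑ t : Fin n, ((∑ j ∈ Finset.Iic t, a j) - ∑ j ∈ Finset.Iic t, η j) := by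
  obtain ⟨i, heq, hlt⟩ := lex_min hη hd a ha hne
  have h5 : ∑ j ∈ Finset.Iio i, η j = ∑ j ∈ Finset.Iio i, a j :=
    Finset.sum_congr rfl fun j hj => (heq j (Finset.mem_Iio.1 hj)).symm
  have hterm : 1 ≤ (∑ j ∈ Finset.Iic i, a j) - ∑ j ∈ Finset.Iic i, η j := by
    rw [Iic_insert' i, Finset.sum_insert (by simp), Finset.sum_insert (by simp)]
    omega
  calc 1 ≤ (∑ j ∈ Finset.Iic i, a j) - ∑ j ∈ Finset.Iic i, η j := hterm
    _ ≤ _ := Finset.single_le_sum (f := fun t => (∑ j ∈ Finset.Iic t, a j) - ∑ j ∈ Finset.Iic t, η j)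
        (fun t _ => Nat.zero_le _) (Finset.mem_univ i)

lemma chain (hd : d ≤ ∑ i, α i) (hn : 3 ≤ n)
    (hα0 : 1 ≤ α ⟨0, by omega⟩) (hmono : Monotone α) :
    ∀ r : ℕ, ∀ a : Fin n → ℕ, a ∈ VT n d α →
    (∑ t : Fin n, ((∑ j ∈ Finset.Iic t, a j) - ∑ j ∈ Finset.Iic t, η j)) ≤ r →
    ∃ (m : ℕ) (c : Fin (m + 1) → (Fin n → ℕ)),
      c 0 = a ∧ c (Fin.last m) = η ∧
      (∀ i : Fin (m + 1), c i ∈ VT n d α) ∧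
      ∀ i : Fin m, lexGT (c i.castSucc) (c i.succ) ∧
        sortedPair (c i.castSucc) (c i.succ) ∧
        (sigSet (c i.castSucc) (c i.succ)).card = 1 := by
  have hηV : η ∈ VT n d α := eta_mem hη hd (by omega)
  intro r
  induction r with
  | zero =>
    intro a ha hr
    have haη : a = η := by
      by_contra hne
      have := rank_pos hη hd a ha hne
      omega
    subst haη
    exact ⟨0, fun _ => a, rfl, rfl, fun _ => ha, fun i => i.elim0⟩
  | succ r ih =>
    intro a ha hr
    by_cases hne : a = η
    · subst hne
      exact ⟨0, fun _ => a, rfl, rfl, fun _ => ha, fun i => i.elim0⟩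
    · obtain ⟨i, i', hii, hai, hai'⟩ := exists_step hη hd hn hα0 hmono a ha hne
      obtain ⟨b, hbV, hlex, hsort, hsig, hpe, hpi⟩ := move a ha i i' hii hai hai'
      have hRdrop : (∑ t : Fin n, ((∑ j ∈ Finset.Iic t, b j) - ∑ j ∈ Finset.Iic t, η j)) + 1
          = ∑ t : Fin n, ((∑ j ∈ Finset.Iic t, a j) - ∑ j ∈ Finset.Iic t, η j) := by
        have hbη : ∑ j ∈ Finset.Iic i, η j ≤ ∑ j ∈ Finset.Iic i, b j :=
          pref_eta_le hη hd b hbV i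
        have hcongr : ∀ t : Fin n,
            ((∑ j ∈ Finset.Iic t, a j) - ∑ j ∈ Finset.Iic t, η j)
            = ((∑ j ∈ Finset.Iic t, b j) - ∑ j ∈ Finset.Iic t, η j)
              + (if t = i then 1 else 0) := by
          intro t
          by_cases ht : t = i
          · subst ht
            rw [if_pos rfl]
            omega
          · rw [if_neg ht, hpe t ht]
            omega
        rw [Finset.sum_congr rfl (fun t _ => hcongr t), Finset.sum_add_distrib,
          Finset.sum_ite_eq' Finset.univ i (fun _ => 1), if_pos (Finset.mem_univ i)]
      obtain ⟨m, c, hc0, hclast, hcV, hedges⟩ := ih b hbV (by omega)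
      refine ⟨m + 1, Fin.cases a c, by simp, ?_, ?_, ?_⟩
      · show (Fin.cases (motive := fun _ => Fin n → ℕ) a c) (Fin.last (m + 1)) = η
        rw [← Fin.succ_last, Fin.cases_succ]
        exact hclast
      · intro k
        induction k using Fin.cases with
        | zero => simpa using ha
        | succ k =>
          show (Fin.cases (motive := fun _ => Fin n → ℕ) a c) k.succ ∈ VT n d α
          rw [Fin.cases_succ]
          exact hcV k
      · intro k
        have e0 : ∀ u : Fin (m + 2),
            (fun i => Fin.cases (motive := fun _ => Fin n → ℕ) a c i) u
              = Fin.cases (motive := fun _ => Fin n → ℕ) a c u := fun _ => rfl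
        induction k using Fin.cases with
        | zero =>
          have e1 : (Fin.cases (motive := fun _ => Fin n → ℕ) a c) (Fin.castSucc 0) = a := rfl
          have e2 : (Fin.cases (motive := fun _ => Fin n → ℕ) a c) (Fin.succ 0) = c 0 := by
            rw [Fin.cases_succ]
          rw [e0, e0, e1, e2, hc0]
          exact ⟨hlex, hsort, hsig⟩
        | succ k =>
          have e1 : (Fin.cases (motive := fun _ => Fin n → ℕ) a c) (Fin.castSucc k.succ)
              = c k.castSucc := by
            rw [← Fin.succ_castSucc, Fin.cases_succ]
          have e2 : (Fin.cases (motive := fun _ => Fin n → ℕ) a c) (Fin.succ k.succ)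
              = c k.succ := by
            rw [Fin.cases_succ]
          rw [e0, e0, e1, e2]
          exact hedges k

end Eta
end Aux14

/-- For every `a ∈ V_{n,d}^α` with `a ≠ η` there is `b ∈ V_{n,d}^α` with
`a >_lex b ≥_lex η`, `(a,b)` sorted and `length(Δ(a,b)) = 1`. Consequently
`rank(a) ≥ 0` and there is a chain from `a` down to `η` of sorted steps of
signature-length one. -/
theorem stmt14 (n d : ℕ) (hn : 3 ≤ n) (α : Fin n → ℕ)
    (hα0 : 1 ≤ α ⟨0, by omega⟩) (hmono : Monotone α)
    (hαd : ∀ i, α i ≤ d) (hdα : d < ∑ i, α i)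
    (η : Fin n → ℕ)
    (hη : ∀ i : Fin n, η i = min (α i) (d - ∑ j ∈ Finset.Ioi i, η j))
    (a : Fin n → ℕ) (ha : a ∈ VT n d α) (hne : a ≠ η) :
    (∃ b ∈ VT n d α, lexGT a b ∧ (b = η ∨ lexGT b η) ∧
        sortedPair a b ∧ (sigSet a b).card = 1) ∧
    0 ≤ ∑ j : Fin n, ((a j : ℤ) - (η j : ℤ)) * ((n : ℤ) - 1 - (j.1 : ℤ)) ∧
    ∃ (m : ℕ) (c : Fin (m + 1) → (Fin n → ℕ)),
      c 0 = a ∧ c (Fin.last m) = η ∧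
      (∀ i : Fin (m + 1), c i ∈ VT n d α) ∧
      ∀ i : Fin m, lexGT (c i.castSucc) (c i.succ) ∧
        sortedPair (c i.castSucc) (c i.succ) ∧
        (sigSet (c i.castSucc) (c i.succ)).card = 1 := by
  classical
  have hd : d ≤ ∑ i, α i := le_of_lt hdα
  obtain ⟨i, i', hii, hai, hai'⟩ := Aux14.exists_step hη hd hn hα0 hmono a ha hne
  obtain ⟨b, hbV, hlex, hsort, hsig, hpe, hpi⟩ := Aux14.move a ha i i' hii hai hai'
  refine ⟨⟨b, hbV, hlex, ?_, hsort, hsig⟩, ?_, ?_⟩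
  · by_cases hbη : b = η
    · exact Or.inl hbη
    · exact Or.inr (Aux14.lex_min hη hd b hbV hbη)
  · set f : Fin n → ℤ := fun j => (a j : ℤ) - η j with hf
    have hIic : ∀ t : Fin n, Finset.Iic t = Finset.univ.filter (fun j => j ≤ t) := by
      intro t; ext j; simp
    have hIci : ∀ j : Fin n, Finset.univ.filter (fun t => j ≤ t) = Finset.Ici j := by
      intro j; ext t; simp
    have hswap : ∑ t : Fin n, ∑ j ∈ Finset.Iic t, f j
        = ∑ j : Fin n, ((n - j.1 : ℕ) : ℤ) * f j := by
      calc ∑ t : Fin n, ∑ j ∈ Finset.Iic t, f j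
          = ∑ t : Fin n, ∑ j : Fin n, if j ≤ t then f j else 0 := by
            refine Finset.sum_congr rfl fun t _ => ?_
            rw [hIic t, Finset.sum_filter]
        _ = ∑ j : Fin n, ∑ t : Fin n, if j ≤ t then f j else 0 := Finset.sum_comm
        _ = ∑ j : Fin n, ((n - j.1 : ℕ) : ℤ) * f j := by
            refine Finset.sum_congr rfl fun j _ => ?_
            rw [← Finset.sum_filter, hIci j, Finset.sum_const, Fin.card_Ici, nsmul_eq_mul]
    have hnn : 0 ≤ ∑ t : Fin n, ∑ j ∈ Finset.Iic t, f j := by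
      refine Finset.sum_nonneg fun t _ => ?_
      have h1 := Aux14.pref_eta_le hη hd a ha t
      have h2 : ∑ j ∈ Finset.Iic t, f j
          = ((∑ j ∈ Finset.Iic t, a j : ℕ) : ℤ) - ((∑ j ∈ Finset.Iic t, η j : ℕ) : ℤ) := by
        simp only [hf]
        push_cast
        rw [Finset.sum_sub_distrib]
      rw [h2]
      exact sub_nonneg.2 (by exact_mod_cast h1)
    have hsum0 : ∑ j : Fin n, f j = 0 := by
      have h1 : ((∑ j, a j : ℕ) : ℤ) - ((∑ j, η j : ℕ) : ℤ) = ∑ j, f j := by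
        simp only [hf]
        push_cast
        rw [Finset.sum_sub_distrib]
      rw [← h1, ha.1, Aux14.sum_eta hη hd (by omega)]
      ring
    have hfin : ∑ j : Fin n, ((a j : ℤ) - (η j : ℤ)) * ((n : ℤ) - 1 - (j.1 : ℤ))
        = (∑ j : Fin n, ((n - j.1 : ℕ) : ℤ) * f j) - ∑ j : Fin n, f j := by
      rw [← Finset.sum_sub_distrib]
      refine Finset.sum_congr rfl fun j _ => ?_
      have hc : ((n - j.1 : ℕ) : ℤ) = (n : ℤ) - j.1 := by
        rw [Nat.cast_sub (le_of_lt j.2)]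
      rw [hc]
      simp only [hf]
      ring
    rw [hfin, ← hswap, hsum0]
    simpa using hnn
  · exact Aux14.chain hη hd hn hα0 hmono
      (∑ t : Fin n, ((∑ j ∈ Finset.Iic t, a j) - ∑ j ∈ Finset.Iic t, η j)) a ha le_rfl
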